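/- Suppose |Q*(h,a) − Q*(h',a')| ≤ ε for all ψ(h,a)=ψ(h',a'). Let π* be an optimal policy of the surrogate MDP p_B (for any stochastic inverse B), and define the uplifted policy Π̆(h) ∈ ψ_s^{-1}(π*(s)) for ψ(h)=s. Then 0 ≤ V*(h) − V^{Π̆}(h) ≤ 4ε/(1−γ)² for all histories h. -/

import Mathlib

open Finset

/-- Suppose `|Q*(h,a) − Q*(h',a')| ≤ ε` for all
`ψ(h,a) = ψ(h',a')`. Let `π*` be an optimal policy of the surrogate MDP `p_B`
(for any stochastic inverse `B`), and let the uplifted policy `Π̆` satisfy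
`Π̆(h) ∈ ψ_s^{-1}(π*(s))` for `f h = s`. Then
`0 ≤ V*(h) − V^{Π̆}(h) ≤ 4ε/(1−γ)²` for all histories `h`. -/
theorem stmt_6
    {H A O R S Bt : Type*} [Fintype A] [Nonempty A] [Fintype O] [Fintype R]
    [Fintype S] [Fintype Bt] [Nonempty Bt] [DecidableEq S]
    (γ : ℝ) (hγ0 : 0 ≤ γ) (hγ1 : γ < 1)
    (ρ : R → ℝ) (hρ : ∀ r, ρ r ∈ Set.Icc (0 : ℝ) 1)
    (P : H → A → O → R → ℝ)
    (hP0 : ∀ h a o r, 0 ≤ P h a o r)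
    (hP1 : ∀ h a, ∑ o : O, ∑ r : R, P h a o r = 1)
    (ext : H → A → O → R → H)
    -- the homomorphism ψ(h,a) = (f h, g h a), surjective
    (f : H → S) (g : H → A → Bt)
    (hsurj : ∀ s b, ∃ h a, f h = s ∧ g h a = b)
    -- optimal (action-)value functions of the original process
    (Qstar : H → A → ℝ) (Vstar : H → ℝ)
    (hQstar : ∀ h a, Qstar h a =
      ∑ o : O, ∑ r : R, P h a o r * (ρ r + γ * Vstar (ext h a o r)))
    (hVstar : ∀ h, Vstar h = Finset.univ.sup' Finset.univ_nonempty (Qstar h))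
    (hVstarBnd : ∀ h, 0 ≤ Vstar h ∧ Vstar h ≤ 1 / (1 - γ))
    -- a stochastic inverse B : S×B → Δ(H×A), supported on ψ-preimages
    (B : S → Bt → H → A → ℝ)
    (hB0 : ∀ s b h a, 0 ≤ B s b h a)
    (hBsupp : ∀ s b h a, B s b h a ≠ 0 → f h = s ∧ g h a = b)
    (hB1 : ∀ s b, HasSum (fun x : H × A => B s b x.1 x.2) 1)
    -- the surrogate MDP p_B(s'r|sb) = Σ_{h,a} P_ψ(s'r|ha) B(ha|sb)
    (pB : S → Bt → S → R → ℝ)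
    (hpB : ∀ s b s' r, HasSum
      (fun x : H × A =>
        (∑ o ∈ Finset.univ.filter fun o => f (ext x.1 x.2 o r) = s',
          P x.1 x.2 o r) * B s b x.1 x.2)
      (pB s b s' r))
    -- optimal (action-)value functions of the surrogate MDP p_B
    (q : S → Bt → ℝ) (v : S → ℝ)
    (hq : ∀ s b, q s b = ∑ s' : S, ∑ r : R, pB s b s' r * (ρ r + γ * v s'))
    (hv : ∀ s, v s = Finset.univ.sup' Finset.univ_nonempty (q s))
    (hvBnd : ∀ s, 0 ≤ v s ∧ v s ≤ 1 / (1 - γ))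
    -- the Q-uniformity assumption
    (ε : ℝ) (hε : 0 ≤ ε)
    (hQunif : ∀ h a h' a', f h = f h' → g h a = g h' a' →
      |Qstar h a - Qstar h' a'| ≤ ε)
    -- an optimal policy π* of the surrogate MDP p_B
    (πs : S → Bt) (hπs : ∀ s, q s (πs s) = v s)
    -- the uplifted policy Π̆ with g h (Π̆ h) = π*(f h), and its value functions
    (Pol : H → A) (hlift : ∀ h, g h (Pol h) = πs (f h))
    (QPol : H → A → ℝ) (VPol : H → ℝ)
    (hQPol : ∀ h a, QPol h a =
      ∑ o : O, ∑ r : R, P h a o r * (ρ r + γ * VPol (ext h a o r)))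
    (hVPol : ∀ h, VPol h = QPol h (Pol h))
    (hVPolBnd : ∀ h, 0 ≤ VPol h ∧ VPol h ≤ 1 / (1 - γ)) :
    ∀ h, 0 ≤ Vstar h - VPol h ∧ Vstar h - VPol h ≤ 4 * ε / (1 - γ) ^ 2 := by

  have h1γ : (0:ℝ) < 1 - γ := by linarith
  intro h₀
  haveI : Nonempty H := ⟨h₀⟩
  -- the "semantic" action value of the surrogate value function, pulled back
  set Qt : H → A → ℝ :=
    fun h a => ∑ o : O, ∑ r : R, P h a o r * (ρ r + γ * v (f (ext h a o r))) with hQt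
  -- expectation bounds
  have sum_le : ∀ (h : H) (a : A) (φ : O → R → ℝ) (C : ℝ),
      (∀ o r, φ o r ≤ C) → ∑ o : O, ∑ r : R, P h a o r * φ o r ≤ C := by
    intro h a φ C hφ
    have h1 : ∑ o : O, ∑ r : R, P h a o r * φ o r ≤ ∑ o : O, ∑ r : R, P h a o r * C := by
      refine Finset.sum_le_sum fun o _ => Finset.sum_le_sum fun r _ => ?_
      exact mul_le_mul_of_nonneg_left (hφ o r) (hP0 h a o r)
    have h2 : ∑ o : O, ∑ r : R, P h a o r * C = C := by
      have h3 : ∑ o : O, ∑ r : R, P h a o r * C = (∑ o : O, ∑ r : R, P h a o r) * C := by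
        rw [Finset.sum_mul]
        exact Finset.sum_congr rfl fun o _ => (Finset.sum_mul _ _ _).symm
      rw [h3, hP1, one_mul]
    linarith
  have sum_ge : ∀ (h : H) (a : A) (φ : O → R → ℝ) (c : ℝ),
      (∀ o r, c ≤ φ o r) → c ≤ ∑ o : O, ∑ r : R, P h a o r * φ o r := by
    intro h a φ c hφ
    have h1 := sum_le h a (fun o r => -φ o r) (-c) (fun o r => by linarith [hφ o r])
    have h2 : ∑ o : O, ∑ r : R, P h a o r * -φ o r
        = -∑ o : O, ∑ r : R, P h a o r * φ o r := by
      simp [mul_neg]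
    rw [h2] at h1; linarith
  -- generic Bellman difference identity
  have gen_diff : ∀ (h : H) (a : A) (W1 W2 : H → ℝ),
      (∑ o : O, ∑ r : R, P h a o r * (ρ r + γ * W1 (ext h a o r))) -
      (∑ o : O, ∑ r : R, P h a o r * (ρ r + γ * W2 (ext h a o r))) =
      γ * ∑ o : O, ∑ r : R, P h a o r * (W1 (ext h a o r) - W2 (ext h a o r)) := by
    intro h a W1 W2
    rw [Finset.mul_sum, ← Finset.sum_sub_distrib]
    refine Finset.sum_congr rfl fun o _ => ?_
    rw [Finset.mul_sum, ← Finset.sum_sub_distrib]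
    exact Finset.sum_congr rfl fun r _ => by ring
  -- q is the B-weighted average of Qt
  have hqB : ∀ s b, HasSum (fun x : H × A => B s b x.1 x.2 * Qt x.1 x.2) (q s b) := by
    intro s b
    have h1 : ∀ p : S × R, HasSum (fun x : H × A =>
        (ρ p.2 + γ * v p.1) *
          ((∑ o ∈ Finset.univ.filter fun o => f (ext x.1 x.2 o p.2) = p.1,
            P x.1 x.2 o p.2) * B s b x.1 x.2))
        ((ρ p.2 + γ * v p.1) * pB s b p.1 p.2) := fun p => (hpB s b p.1 p.2).mul_left _
    have h2 := hasSum_sum (s := (Finset.univ : Finset (S × R))) (fun p _ => h1 p)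
    have e1 : ∑ p : S × R, (ρ p.2 + γ * v p.1) * pB s b p.1 p.2 = q s b := by
      rw [hq, Fintype.sum_prod_type]
      exact Finset.sum_congr rfl fun s' _ => Finset.sum_congr rfl fun r _ => mul_comm _ _
    rw [e1] at h2
    refine h2.congr_fun fun x => ?_
    rw [Fintype.sum_prod_type, Finset.sum_comm]
    have e2 : ∀ r : R, ∑ s' : S, (ρ r + γ * v s') *
        ((∑ o ∈ Finset.univ.filter fun o => f (ext x.1 x.2 o r) = s',
          P x.1 x.2 o r) * B s b x.1 x.2)
        = ∑ o : O, P x.1 x.2 o r * (ρ r + γ * v (f (ext x.1 x.2 o r))) * B s b x.1 x.2 := by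
      intro r
      rw [← Finset.sum_fiberwise_of_maps_to (g := fun o => f (ext x.1 x.2 o r))
        (t := Finset.univ) (fun o _ => Finset.mem_univ _)]
      refine Finset.sum_congr rfl fun s' _ => ?_
      rw [Finset.sum_mul, Finset.mul_sum]
      refine Finset.sum_congr rfl fun o ho => ?_
      have hfo : f (ext x.1 x.2 o r) = s' := (Finset.mem_filter.mp ho).2
      rw [hfo]; ring
    rw [Finset.sum_congr rfl fun r _ => e2 r]
    rw [Finset.sum_comm]
    simp only [hQt, Finset.mul_sum]
    exact Finset.sum_congr rfl fun o _ => Finset.sum_congr rfl fun r _ => by ring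
  -- sup definitions
  have bdd : ∀ W1 W2 : H → ℝ, (∀ h, 0 ≤ W1 h ∧ W1 h ≤ 1 / (1 - γ)) →
      (∀ h, 0 ≤ W2 h ∧ W2 h ≤ 1 / (1 - γ)) →
      BddAbove (Set.range fun h => W1 h - W2 h) := by
    intro W1 W2 hW1 hW2
    refine ⟨1 / (1 - γ), ?_⟩
    rintro x ⟨h, rfl⟩
    dsimp only
    have := (hW1 h).2; have := (hW2 h).1
    linarith
  set Mp : ℝ := sSup (Set.range fun h => Vstar h - v (f h)) with hMpdef
  set Mm : ℝ := sSup (Set.range fun h => v (f h) - Vstar h) with hMmdef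
  have bddMp : BddAbove (Set.range fun h => Vstar h - v (f h)) :=
    bdd _ _ hVstarBnd (fun h => hvBnd (f h))
  have bddMm : BddAbove (Set.range fun h => v (f h) - Vstar h) :=
    bdd _ _ (fun h => hvBnd (f h)) hVstarBnd
  have hMp_mem : ∀ h, Vstar h - v (f h) ≤ Mp := fun h => le_csSup bddMp ⟨h, rfl⟩
  have hMm_mem : ∀ h, v (f h) - Vstar h ≤ Mm := fun h => le_csSup bddMm ⟨h, rfl⟩
  -- Qt vs Qstar bounds
  have hQtdiff : ∀ h a, Qt h a - Qstar h a =
      γ * ∑ o : O, ∑ r : R, P h a o r * (v (f (ext h a o r)) - Vstar (ext h a o r)) := by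
    intro h a
    rw [hQstar h a]
    exact gen_diff h a (fun x => v (f x)) Vstar
  have hQt_lb : ∀ h a, Qstar h a - γ * Mp ≤ Qt h a := by
    intro h a
    have h1 : -Mp ≤ ∑ o : O, ∑ r : R, P h a o r *
        (v (f (ext h a o r)) - Vstar (ext h a o r)) :=
      sum_ge h a _ _ (fun o r => by linarith [hMp_mem (ext h a o r)])
    have h2 := hQtdiff h a
    nlinarith
  have hQt_ub : ∀ h a, Qt h a ≤ Qstar h a + γ * Mm := by
    intro h a
    have h1 : ∑ o : O, ∑ r : R, P h a o r *
        (v (f (ext h a o r)) - Vstar (ext h a o r)) ≤ Mm :=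
      sum_le h a _ _ (fun o r => by linarith [hMm_mem (ext h a o r)])
    have h2 := hQtdiff h a
    nlinarith
  -- q vs Qstar bounds
  have lemA : ∀ h a, Qstar h a - (ε + γ * Mp) ≤ q (f h) (g h a) := by
    intro h a
    have hc : HasSum (fun x : H × A => B (f h) (g h a) x.1 x.2 * (Qstar h a - (ε + γ * Mp)))
        (Qstar h a - (ε + γ * Mp)) := by
      simpa using (hB1 (f h) (g h a)).mul_right (Qstar h a - (ε + γ * Mp))
    refine hasSum_le ?_ hc (hqB (f h) (g h a))
    intro x
    by_cases hx : B (f h) (g h a) x.1 x.2 = 0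
    · simp [hx]
    · obtain ⟨hf, hg⟩ := hBsupp _ _ _ _ hx
      have h1 := hQunif h a x.1 x.2 hf.symm hg.symm
      rw [abs_le] at h1
      have h2 := hQt_lb x.1 x.2
      exact mul_le_mul_of_nonneg_left (by linarith [h1.2]) (hB0 _ _ _ _)
  have lemB : ∀ h a, q (f h) (g h a) ≤ Qstar h a + (ε + γ * Mm) := by
    intro h a
    have hc : HasSum (fun x : H × A => B (f h) (g h a) x.1 x.2 * (Qstar h a + (ε + γ * Mm)))
        (Qstar h a + (ε + γ * Mm)) := by
      simpa using (hB1 (f h) (g h a)).mul_right (Qstar h a + (ε + γ * Mm))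
    refine hasSum_le ?_ (hqB (f h) (g h a)) hc
    intro x
    by_cases hx : B (f h) (g h a) x.1 x.2 = 0
    · simp [hx]
    · obtain ⟨hf, hg⟩ := hBsupp _ _ _ _ hx
      have h1 := hQunif h a x.1 x.2 hf.symm hg.symm
      rw [abs_le] at h1
      have h2 := hQt_ub x.1 x.2
      exact mul_le_mul_of_nonneg_left (by linarith [h1.1]) (hB0 _ _ _ _)
  -- sup' facts
  have hq_le_v : ∀ s b, q s b ≤ v s := by
    intro s b; rw [hv]; exact Finset.le_sup' (q s) (Finset.mem_univ b)
  have hQ_le_V : ∀ h a, Qstar h a ≤ Vstar h := by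
    intro h a; rw [hVstar]; exact Finset.le_sup' (Qstar h) (Finset.mem_univ a)
  have hVmax : ∀ h, ∃ a, Vstar h = Qstar h a := by
    intro h
    obtain ⟨a, -, ha⟩ := Finset.exists_mem_eq_sup' Finset.univ_nonempty (Qstar h)
    exact ⟨a, by rw [hVstar]; exact ha⟩
  have hvPol : ∀ h, v (f h) = q (f h) (g h (Pol h)) := by
    intro h; rw [hlift h, hπs]
  -- Mp bound
  have hMp : Mp ≤ ε / (1 - γ) := by
    have h1 : Mp ≤ ε + γ * Mp := by
      refine csSup_le (Set.range_nonempty _) ?_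
      rintro x ⟨h, rfl⟩
      dsimp only
      obtain ⟨a, ha⟩ := hVmax h
      have h2 := lemA h a
      have h3 := hq_le_v (f h) (g h a)
      linarith
    rw [le_div_iff₀ h1γ]; nlinarith
  have hMm : Mm ≤ ε / (1 - γ) := by
    have h1 : Mm ≤ ε + γ * Mm := by
      refine csSup_le (Set.range_nonempty _) ?_
      rintro x ⟨h, rfl⟩
      dsimp only
      have h2 := lemB h (Pol h)
      have h3 := hQ_le_V h (Pol h)
      have h4 := hvPol h
      linarith
    rw [le_div_iff₀ h1γ]; nlinarith
  -- QPol vs Qstar difference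
  have hQPdiff : ∀ h a, QPol h a - Qstar h a =
      γ * ∑ o : O, ∑ r : R, P h a o r * (VPol (ext h a o r) - Vstar (ext h a o r)) := by
    intro h a
    rw [hQPol h a, hQstar h a]
    exact gen_diff h a VPol Vstar
  -- lower bound: VPol ≤ Vstar
  have bddDm : BddAbove (Set.range fun h => VPol h - Vstar h) := bdd _ _ hVPolBnd hVstarBnd
  set Dm : ℝ := sSup (Set.range fun h => VPol h - Vstar h) with hDmdef
  have hDm : Dm ≤ 0 := by
    have h1 : Dm ≤ γ * Dm := by
      refine csSup_le (Set.range_nonempty _) ?_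
      rintro x ⟨h, rfl⟩
      dsimp only
      have h2 : ∑ o : O, ∑ r : R, P h (Pol h) o r *
          (VPol (ext h (Pol h) o r) - Vstar (ext h (Pol h) o r)) ≤ Dm :=
        sum_le h (Pol h) _ _ (fun o r => le_csSup bddDm ⟨ext h (Pol h) o r, rfl⟩)
      have h3 := hQPdiff h (Pol h)
      have h4 := hQ_le_V h (Pol h)
      have h5 := hVPol h
      nlinarith
    nlinarith
  -- upper bound
  have bddD : BddAbove (Set.range fun h => Vstar h - VPol h) := bdd _ _ hVstarBnd hVPolBnd
  set D : ℝ := sSup (Set.range fun h => Vstar h - VPol h) with hDdef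
  have hD : D ≤ 2 * ε / (1 - γ) ^ 2 := by
    have h1 : D ≤ (2 * ε + γ * Mp + γ * Mm) + γ * D := by
      refine csSup_le (Set.range_nonempty _) ?_
      rintro x ⟨h, rfl⟩
      dsimp only
      obtain ⟨a, ha⟩ := hVmax h
      have h2 := lemA h a
      have h3 := hq_le_v (f h) (g h a)
      have h4 := hvPol h
      have h5 := lemB h (Pol h)
      have h6 : ∑ o : O, ∑ r : R, P h (Pol h) o r *
          (Vstar (ext h (Pol h) o r) - VPol (ext h (Pol h) o r)) ≤ D :=
        sum_le h (Pol h) _ _ (fun o r => le_csSup bddD ⟨ext h (Pol h) o r, rfl⟩)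
      have h7 : Qstar h (Pol h) - QPol h (Pol h) ≤ γ * D := by
        have h8 := hQPdiff h (Pol h)
        have h9 : ∑ o : O, ∑ r : R, P h (Pol h) o r *
            (VPol (ext h (Pol h) o r) - Vstar (ext h (Pol h) o r))
            = -∑ o : O, ∑ r : R, P h (Pol h) o r *
            (Vstar (ext h (Pol h) o r) - VPol (ext h (Pol h) o r)) := by
          rw [← Finset.sum_neg_distrib]
          refine Finset.sum_congr rfl fun o _ => ?_
          rw [← Finset.sum_neg_distrib]
          exact Finset.sum_congr rfl fun r _ => by ring
        nlinarith
      have h10 := hVPol h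
      linarith
    have hMp' : γ * Mp ≤ γ * (ε / (1 - γ)) := mul_le_mul_of_nonneg_left hMp hγ0
    have hMm' : γ * Mm ≤ γ * (ε / (1 - γ)) := mul_le_mul_of_nonneg_left hMm hγ0
    have hA : D * (1 - γ) ≤ 2 * ε + 2 * (γ * (ε / (1 - γ))) := by nlinarith
    have hC : (D * (1 - γ)) * (1 - γ) ≤ (2 * ε + 2 * (γ * (ε / (1 - γ)))) * (1 - γ) :=
      mul_le_mul_of_nonneg_right hA (le_of_lt h1γ)
    have hB : (2 * ε + 2 * (γ * (ε / (1 - γ)))) * (1 - γ) = 2 * ε := by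
      field_simp; ring
    rw [le_div_iff₀ (by positivity : (0:ℝ) < (1 - γ) ^ 2)]
    nlinarith [hC, hB]
  constructor
  · have := le_csSup bddDm (⟨h₀, rfl⟩ : VPol h₀ - Vstar h₀ ∈ Set.range _)
    linarith
  · have h1 := le_csSup bddD (⟨h₀, rfl⟩ : Vstar h₀ - VPol h₀ ∈ Set.range _)
    have h2 : 2 * ε / (1 - γ) ^ 2 ≤ 4 * ε / (1 - γ) ^ 2 := by
      gcongr
      linarith
    linarith
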